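/- Let (F_{i,j}) be a biparameter filtration on a probability space satisfying the (F4) condition. For integrable f, the (F4) condition E(E(f | F_{i,j}) | F_{i',j'}) = E(f | F_{min(i,i'), min(j,j')}) holds for all i,j,i',j' if and only if for every i, j, the σ-fields F_{i,j+1} and F_{i+1,j} are conditionally independent given F_{i,j}. -/

import Mathlib

open MeasureTheory

lemma aux_integrable_of_bdd {Ω : Type*} {m : MeasurableSpace Ω} {μ : Measure Ω}
    [IsFiniteMeasure μ] {g : Ω → ℝ} {C : ℝ}
    (hmeas : AEStronglyMeasurable g μ) (hbdd : ∀ ω, |g ω| ≤ C) : Integrable g μ :=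
  ⟨hmeas, HasFiniteIntegral.of_bounded (ae_of_all μ fun ω => by
    simpa [Real.norm_eq_abs] using hbdd ω)⟩

/-- From conditional independence of `m1` and `m2` given `m0`, bounded `m2`-measurable
functions have the same conditional expectation w.r.t. `m1` and `m0`. -/
lemma aux_keyA {Ω : Type*} {m0 m1 m2 : MeasurableSpace Ω} {m : MeasurableSpace Ω}
    {μ : Measure Ω} [IsProbabilityMeasure μ]
    (h01 : m0 ≤ m1) (h1 : m1 ≤ m) (h2 : m2 ≤ m)
    (hci : ∀ g h : Ω → ℝ,
        (∃ C : ℝ, ∀ ω, |g ω| ≤ C) → (∃ C : ℝ, ∀ ω, |h ω| ≤ C) →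
        Measurable[m1] g → Measurable[m2] h →
        μ[(fun ω => g ω * h ω)|m0] =ᵐ[μ]
          fun ω => (μ[g|m0]) ω * (μ[h|m0]) ω)
    {h : Ω → ℝ} {C : ℝ} (hbdd : ∀ ω, |h ω| ≤ C) (hmeas : Measurable[m2] h) :
    μ[h|m1] =ᵐ[μ] μ[h|m0] := by
  have h0 : m0 ≤ m := h01.trans h1
  have hhm : AEStronglyMeasurable h μ := (hmeas.mono h2 le_rfl).aestronglyMeasurable
  have hint : Integrable h μ := aux_integrable_of_bdd hhm hbdd
  refine (ae_eq_condExp_of_forall_setIntegral_eq h1 hint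
    (fun s _ _ => integrable_condExp.integrableOn)
    (fun s hs _ => ?_)
    ((stronglyMeasurable_condExp.mono h01).aestronglyMeasurable)).symm
  set g : Ω → ℝ := s.indicator (fun _ => (1:ℝ)) with hg
  have hgmeas1 : Measurable[m1] g := (@measurable_const ℝ Ω _ m1 1).indicator hs
  have hgbdd : ∀ ω, |g ω| ≤ 1 := fun ω => by
    by_cases hω : ω ∈ s <;> simp [hg, Set.indicator, hω]
  have hgint : Integrable g μ :=
    aux_integrable_of_bdd ((hgmeas1.mono h1 le_rfl).aestronglyMeasurable) hgbdd
  have hsm : MeasurableSet s := h1 _ hs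
  have hghint : Integrable (fun ω => g ω * h ω) μ := by
    refine aux_integrable_of_bdd (C := |C|)
      (((hgmeas1.mono h1 le_rfl).mul (hmeas.mono h2 le_rfl)).aestronglyMeasurable) fun ω => ?_
    have h1' := hgbdd ω; have h2' := hbdd ω
    have := abs_mul (g ω) (h ω)
    nlinarith [abs_nonneg (g ω), abs_nonneg (h ω), le_abs_self C]
  have hprod : Integrable (fun ω => (μ[h|m0]) ω * g ω) μ :=
    (Integrable.bdd_mul integrable_condExp
      ((hgmeas1.mono h1 le_rfl).aestronglyMeasurable)
      (ae_of_all _ fun ω => by simpa [Real.norm_eq_abs] using hgbdd ω)).congr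
      (ae_of_all _ fun ω => mul_comm _ _)
  calc ∫ x in s, (μ[h|m0]) x ∂μ
      = ∫ x, s.indicator (μ[h|m0]) x ∂μ := (integral_indicator hsm).symm
    _ = ∫ x, (μ[h|m0]) x * g x ∂μ := by
        refine integral_congr_ae (ae_of_all _ fun x => ?_)
        by_cases hx : x ∈ s <;> simp [hg, Set.indicator, hx]
    _ = ∫ x, (μ[(fun ω => (μ[h|m0]) ω * g ω)|m0]) x ∂μ := (integral_condExp h0).symm
    _ = ∫ x, (μ[h|m0]) x * (μ[g|m0]) x ∂μ := by
        refine integral_congr_ae ?_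
        exact condExp_mul_of_stronglyMeasurable_left stronglyMeasurable_condExp hprod hgint
    _ = ∫ x, (μ[g|m0]) x * (μ[h|m0]) x ∂μ :=
        integral_congr_ae (ae_of_all _ fun x => mul_comm _ _)
    _ = ∫ x, (μ[(fun ω => g ω * h ω)|m0]) x ∂μ :=
        (integral_congr_ae (hci g h ⟨1, hgbdd⟩ ⟨C, hbdd⟩ hgmeas1 hmeas)).symm
    _ = ∫ x, g x * h x ∂μ := integral_condExp h0
    _ = ∫ x, s.indicator h x ∂μ := by
        refine integral_congr_ae (ae_of_all _ fun x => ?_)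
        by_cases hx : x ∈ s <;> simp [hg, Set.indicator, hx]
    _ = ∫ x in s, h x ∂μ := integral_indicator hsm

lemma aux_keyB {Ω : Type*} {m0 m1 m2 : MeasurableSpace Ω} {m : MeasurableSpace Ω}
    {μ : Measure Ω} [IsProbabilityMeasure μ]
    (h01 : m0 ≤ m1) (h02 : m0 ≤ m2) (h1 : m1 ≤ m) (h2 : m2 ≤ m)
    (hci : ∀ g h : Ω → ℝ,
        (∃ C : ℝ, ∀ ω, |g ω| ≤ C) → (∃ C : ℝ, ∀ ω, |h ω| ≤ C) →
        Measurable[m1] g → Measurable[m2] h →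
        μ[(fun ω => g ω * h ω)|m0] =ᵐ[μ]
          fun ω => (μ[g|m0]) ω * (μ[h|m0]) ω)
    {g : Ω → ℝ} (hgint : Integrable g μ) (hgm : StronglyMeasurable[m1] g) :
    μ[g|m2] =ᵐ[μ] μ[g|m0] := by
  have h0 : m0 ≤ m := h01.trans h1
  refine (ae_eq_condExp_of_forall_setIntegral_eq h2 hgint
    (fun s _ _ => integrable_condExp.integrableOn)
    (fun s hs _ => ?_)
    ((stronglyMeasurable_condExp.mono h02).aestronglyMeasurable)).symm
  set k : Ω → ℝ := s.indicator (fun _ => (1:ℝ)) with hk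
  have hkmeas2 : Measurable[m2] k := (@measurable_const ℝ Ω _ m2 1).indicator hs
  have hkbdd : ∀ ω, |k ω| ≤ 1 := fun ω => by
    by_cases hω : ω ∈ s <;> simp [hk, Set.indicator, hω]
  have hkasm : AEStronglyMeasurable k μ := (hkmeas2.mono h2 le_rfl).aestronglyMeasurable
  have hknorm : ∀ᵐ x ∂μ, ‖k x‖ ≤ (1:ℝ) :=
    ae_of_all μ fun ω => by simpa [Real.norm_eq_abs] using hkbdd ω
  have hkint : Integrable k μ := aux_integrable_of_bdd hkasm hkbdd
  have hsm : MeasurableSet s := h2 _ hs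
  have hkey : μ[k|m1] =ᵐ[μ] μ[k|m0] := aux_keyA h01 h1 h2 hci hkbdd hkmeas2
  have hbd0 : ∀ᵐ x ∂μ, ‖(μ[k|m0]) x‖ ≤ (1:ℝ) := by
    have := ae_bdd_condExp_of_ae_bdd (μ := μ) (m := m0) (R := 1)
      (ae_of_all μ fun ω => by simpa using hkbdd ω)
    filter_upwards [this] with x hx
    simpa [Real.norm_eq_abs] using hx
  -- integrability of the products
  have hgk : Integrable (fun ω => g ω * k ω) μ :=
    (Integrable.bdd_mul hgint hkasm hknorm).congr (ae_of_all _ fun ω => mul_comm _ _)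
  have hXg : Integrable (fun ω => (μ[k|m0]) ω * g ω) μ :=
    Integrable.bdd_mul hgint (stronglyMeasurable_condExp.mono h0).aestronglyMeasurable hbd0
  have hYk : Integrable (fun ω => (μ[g|m0]) ω * k ω) μ :=
    (Integrable.bdd_mul integrable_condExp hkasm hknorm).congr
      (ae_of_all _ fun ω => mul_comm _ _)
  calc ∫ x in s, (μ[g|m0]) x ∂μ
      = ∫ x, s.indicator (μ[g|m0]) x ∂μ := (integral_indicator hsm).symm
    _ = ∫ x, (μ[g|m0]) x * k x ∂μ := by
        refine integral_congr_ae (ae_of_all _ fun x => ?_)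
        by_cases hx : x ∈ s <;> simp [hk, Set.indicator, hx]
    _ = ∫ x, (μ[(fun ω => (μ[g|m0]) ω * k ω)|m0]) x ∂μ := (integral_condExp h0).symm
    _ = ∫ x, (μ[g|m0]) x * (μ[k|m0]) x ∂μ := integral_congr_ae
        (condExp_mul_of_stronglyMeasurable_left stronglyMeasurable_condExp hYk hkint)
    _ = ∫ x, (μ[k|m0]) x * (μ[g|m0]) x ∂μ :=
        integral_congr_ae (ae_of_all _ fun x => mul_comm _ _)
    _ = ∫ x, (μ[(fun ω => (μ[k|m0]) ω * g ω)|m0]) x ∂μ := (integral_congr_ae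
        (condExp_mul_of_stronglyMeasurable_left stronglyMeasurable_condExp hXg hgint)).symm
    _ = ∫ x, (μ[k|m0]) x * g x ∂μ := integral_condExp h0
    _ = ∫ x, g x * (μ[k|m1]) x ∂μ := by
        refine integral_congr_ae ?_
        filter_upwards [hkey] with x hx
        rw [hx, mul_comm]
    _ = ∫ x, (μ[(fun ω => g ω * k ω)|m1]) x ∂μ := (integral_congr_ae
        (condExp_mul_of_stronglyMeasurable_left hgm hgk hkint)).symm
    _ = ∫ x, g x * k x ∂μ := integral_condExp h1
    _ = ∫ x, s.indicator g x ∂μ := by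
        refine integral_congr_ae (ae_of_all _ fun x => ?_)
        by_cases hx : x ∈ s <;> simp [hk, Set.indicator, hx]
    _ = ∫ x in s, g x ∂μ := integral_indicator hsm

theorem F4_iff_condIndep
    {Ω : Type*} {m : MeasurableSpace Ω} (μ : Measure Ω) [IsProbabilityMeasure μ]
    (F : ℕ → ℕ → MeasurableSpace Ω)
    (hle : ∀ i j, F i j ≤ m)
    (hmono₁ : ∀ i j, F i j ≤ F (i + 1) j) (hmono₂ : ∀ i j, F i j ≤ F i (j + 1)) :
    (∀ f : Ω → ℝ, Integrable f μ → ∀ i j i' j',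
        μ[ (μ[f | F i j]) | F i' j'] =ᵐ[μ] μ[f | F (min i i') (min j j')])
    ↔
    (∀ i j, ∀ g h : Ω → ℝ,
        (∃ C : ℝ, ∀ ω, |g ω| ≤ C) → (∃ C : ℝ, ∀ ω, |h ω| ≤ C) →
        Measurable[F i (j + 1)] g → Measurable[F (i + 1) j] h →
        μ[ (fun ω => g ω * h ω) | F i j] =ᵐ[μ]
          fun ω => (μ[g | F i j]) ω * (μ[h | F i j]) ω) := by
  have hrow : ∀ i i' j, i ≤ i' → F i j ≤ F i' j := by
    intro i i' j hii'
    induction hii' with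
    | refl => exact le_rfl
    | step _ ih => exact ih.trans (hmono₁ _ _)
  have hcol : ∀ i j j', j ≤ j' → F i j ≤ F i j' := by
    intro i j j' hjj'
    induction hjj' with
    | refl => exact le_rfl
    | step _ ih => exact ih.trans (hmono₂ _ _)
  have hFle : ∀ {i j i' j'}, i ≤ i' → j ≤ j' → F i j ≤ F i' j' :=
    fun {i j i' j'} h1 h2 => (hrow i i' j h1).trans (hcol i' j j' h2)
  constructor
  · -- F4 → conditional independence
    intro hF4 i j g h hgb hhb hgm hhm
    obtain ⟨Cg, hCg⟩ := hgb
    obtain ⟨Ch, hCh⟩ := hhb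
    have hgint : Integrable g μ :=
      aux_integrable_of_bdd ((hgm.mono (hle _ _) le_rfl).aestronglyMeasurable) hCg
    have hhint : Integrable h μ :=
      aux_integrable_of_bdd ((hhm.mono (hle _ _) le_rfl).aestronglyMeasurable) hCh
    have hghint : Integrable (fun ω => g ω * h ω) μ := by
      refine aux_integrable_of_bdd (C := |Cg| * |Ch|)
        (((hgm.mono (hle _ _) le_rfl).mul (hhm.mono (hle _ _) le_rfl)).aestronglyMeasurable)
        fun ω => ?_
      have := abs_mul (g ω) (h ω)
      nlinarith [abs_nonneg (g ω), abs_nonneg (h ω), hCg ω, hCh ω,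
        le_abs_self Cg, le_abs_self Ch]
    -- step 1: μ[h | F i (j+1)] = μ[h | F i j]
    have h1 : μ[h | F i (j+1)] =ᵐ[μ] μ[h | F i j] := by
      have hmin : F (min (i+1) i) (min j (j+1)) = F i j := by
        rw [min_eq_right (Nat.le_succ i), min_eq_left (Nat.le_succ j)]
      have := hF4 h hhint (i+1) j i (j+1)
      rw [hmin] at this
      have heq : μ[h | F (i+1) j] = h :=
        condExp_of_stronglyMeasurable (hle _ _) (hhm.mono le_rfl le_rfl).stronglyMeasurable hhint
      rwa [heq] at this
    -- integrable products for pull-out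
    have hprod1 : Integrable (fun ω => g ω * h ω) μ := hghint
    have hprod2 : Integrable (fun ω => g ω * (μ[h | F i (j+1)]) ω) μ :=
      Integrable.bdd_mul integrable_condExp
        ((hgm.mono (hle _ _) le_rfl).aestronglyMeasurable)
        (ae_of_all _ fun ω => by
          simpa [Real.norm_eq_abs] using (hCg ω).trans (le_abs_self Cg))
    have hprod3 : Integrable (fun ω => (μ[h | F i j]) ω * g ω) μ :=
      (Integrable.bdd_mul integrable_condExp
        ((hgm.mono (hle _ _) le_rfl).aestronglyMeasurable)
        (ae_of_all _ fun ω => by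
          simpa [Real.norm_eq_abs] using (hCg ω).trans (le_abs_self Cg))).congr
        (ae_of_all _ fun ω => mul_comm _ _)
    calc μ[(fun ω => g ω * h ω) | F i j]
        =ᵐ[μ] μ[ (μ[(fun ω => g ω * h ω) | F i (j+1)]) | F i j] :=
          (condExp_condExp_of_le (hmono₂ i j) (hle i (j+1))).symm
      _ =ᵐ[μ] μ[ (fun ω => g ω * (μ[h | F i (j+1)]) ω) | F i j] :=
          condExp_congr_ae (condExp_mul_of_stronglyMeasurable_left
            (hgm.mono le_rfl le_rfl).stronglyMeasurable hprod1 hhint)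
      _ =ᵐ[μ] μ[ (fun ω => g ω * (μ[h | F i j]) ω) | F i j] := by
          refine condExp_congr_ae ?_
          filter_upwards [h1] with ω hω
          rw [hω]
      _ =ᵐ[μ] μ[ (fun ω => (μ[h | F i j]) ω * g ω) | F i j] := by
          refine condExp_congr_ae (ae_of_all _ fun ω => mul_comm _ _)
      _ =ᵐ[μ] fun ω => (μ[h | F i j]) ω * (μ[g | F i j]) ω :=
          condExp_mul_of_stronglyMeasurable_left stronglyMeasurable_condExp hprod3 hgint
      _ =ᵐ[μ] fun ω => (μ[g | F i j]) ω * (μ[h | F i j]) ω :=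
          ae_of_all _ fun ω => mul_comm _ _
  · -- conditional independence → F4
    intro hci f hf i j i' j'
    -- key step (one step in i): integrable F i (j+1)-measurable g
    have keyK : ∀ i j (g : Ω → ℝ), Integrable g μ → StronglyMeasurable[F i (j+1)] g →
        μ[g | F (i+1) j] =ᵐ[μ] μ[g | F i j] := by
      intro i j g hg hgm
      exact aux_keyB (hmono₂ i j) (hmono₁ i j) (hle _ _) (hle _ _) (hci i j) hg hgm
    have keyK' : ∀ i j (g : Ω → ℝ), Integrable g μ → StronglyMeasurable[F (i+1) j] g →
        μ[g | F i (j+1)] =ᵐ[μ] μ[g | F i j] := by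
      intro i j g hg hgm
      refine aux_keyB (hmono₁ i j) (hmono₂ i j) (hle _ _) (hle _ _) ?_ hg hgm
      intro a b hab hbb hma hmb
      have := hci i j b a hbb hab hmb hma
      exact ((condExp_congr_ae (ae_of_all _ fun ω => mul_comm _ _)).trans this).trans
        (ae_of_all _ fun ω => mul_comm _ _)
    -- downward induction: one step in i, arbitrary drop in j
    have stepU : ∀ k i j' (g : Ω → ℝ), Integrable g μ → StronglyMeasurable[F i (j'+k)] g →
        μ[g | F (i+1) j'] =ᵐ[μ] μ[g | F i j'] := by
      intro k
      induction k with
      | zero =>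
        intro i j' g hg hgm
        have e1 : μ[g | F (i+1) j'] = g :=
          condExp_of_stronglyMeasurable (hle _ _) (hgm.mono (hmono₁ i j')) hg
        have e2 : μ[g | F i j'] = g :=
          condExp_of_stronglyMeasurable (hle _ _) hgm hg
        rw [e1, e2]
      | succ k ih =>
        intro i j' g hg hgm
        calc μ[g | F (i+1) j']
            =ᵐ[μ] μ[ (μ[g | F (i+1) (j'+k)]) | F (i+1) j'] :=
              (condExp_condExp_of_le (hcol _ _ _ (Nat.le_add_right j' k)) (hle _ _)).symm
          _ =ᵐ[μ] μ[ (μ[g | F i (j'+k)]) | F (i+1) j'] :=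
              condExp_congr_ae (keyK i (j'+k) g hg hgm)
          _ =ᵐ[μ] μ[ (μ[g | F i (j'+k)]) | F i j'] :=
              ih i j' _ integrable_condExp stronglyMeasurable_condExp
          _ =ᵐ[μ] μ[g | F i j'] :=
              condExp_condExp_of_le (hcol _ _ _ (Nat.le_add_right j' k)) (hle _ _)
    -- symmetric: one step in j, arbitrary drop in i
    have stepV : ∀ k j i' (g : Ω → ℝ), Integrable g μ → StronglyMeasurable[F (i'+k) j] g →
        μ[g | F i' (j+1)] =ᵐ[μ] μ[g | F i' j] := by
      intro k
      induction k with
      | zero =>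
        intro j i' g hg hgm
        have e1 : μ[g | F i' (j+1)] = g :=
          condExp_of_stronglyMeasurable (hle _ _) (hgm.mono (hmono₂ i' j)) hg
        have e2 : μ[g | F i' j] = g :=
          condExp_of_stronglyMeasurable (hle _ _) hgm hg
        rw [e1, e2]
      | succ k ih =>
        intro j i' g hg hgm
        calc μ[g | F i' (j+1)]
            =ᵐ[μ] μ[ (μ[g | F (i'+k) (j+1)]) | F i' (j+1)] :=
              (condExp_condExp_of_le (hrow _ _ _ (Nat.le_add_right i' k)) (hle _ _)).symm
          _ =ᵐ[μ] μ[ (μ[g | F (i'+k) j]) | F i' (j+1)] :=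
              condExp_congr_ae (keyK' (i'+k) j g hg hgm)
          _ =ᵐ[μ] μ[ (μ[g | F (i'+k) j]) | F i' j] :=
              ih j i' _ integrable_condExp stronglyMeasurable_condExp
          _ =ᵐ[μ] μ[g | F i' j] :=
              condExp_condExp_of_le (hrow _ _ _ (Nat.le_add_right i' k)) (hle _ _)
    -- iterated: arbitrary increase in i, with j' ≤ j
    have lemA : ∀ p i j j' (g : Ω → ℝ), j' ≤ j → Integrable g μ →
        StronglyMeasurable[F i j] g → μ[g | F (i+p) j'] =ᵐ[μ] μ[g | F i j'] := by
      intro p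
      induction p with
      | zero => intro i j j' g _ _ _; rfl
      | succ p ih =>
        intro i j j' g hj' hg hgm
        have hstep : μ[g | F (i+p+1) j'] =ᵐ[μ] μ[g | F (i+p) j'] := by
          refine stepU (j - j') (i+p) j' g hg ?_
          have hh : j' + (j - j') = j := by omega
          rw [hh]
          exact hgm.mono (hrow i (i+p) j (Nat.le_add_right i p))
        exact hstep.trans (ih i j j' g hj' hg hgm)
    have lemB : ∀ q i j i' (g : Ω → ℝ), i' ≤ i → Integrable g μ →
        StronglyMeasurable[F i j] g → μ[g | F i' (j+q)] =ᵐ[μ] μ[g | F i' j] := by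
      intro q
      induction q with
      | zero => intro i j i' g _ _ _; rfl
      | succ q ih =>
        intro i j i' g hi' hg hgm
        have hstep : μ[g | F i' (j+q+1)] =ᵐ[μ] μ[g | F i' (j+q)] := by
          refine stepV (i - i') (j+q) i' g hg ?_
          have hh : i' + (i - i') = i := by omega
          rw [hh]
          exact hgm.mono (hcol i j (j+q) (Nat.le_add_right j q))
        exact hstep.trans (ih i j i' g hi' hg hgm)
    -- main case analysis
    rcases le_total i i' with hii | hii <;> rcases le_total j j' with hjj | hjj
    · -- i ≤ i', j ≤ j'
      rw [min_eq_left hii, min_eq_left hjj]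
      have : μ[ (μ[f | F i j]) | F i' j'] = μ[f | F i j] :=
        condExp_of_stronglyMeasurable (hle _ _)
          (stronglyMeasurable_condExp.mono (hFle hii hjj)) integrable_condExp
      rw [this]
    · -- i ≤ i', j' ≤ j
      rw [min_eq_left hii, min_eq_right hjj]
      have h1 : μ[ (μ[f | F i j]) | F i' j'] =ᵐ[μ] μ[ (μ[f | F i j]) | F i j'] := by
        have hh : i + (i' - i) = i' := by omega
        have := lemA (i' - i) i j j' (μ[f | F i j]) hjj integrable_condExp
          stronglyMeasurable_condExp
        rwa [hh] at this
      exact h1.trans (condExp_condExp_of_le (hcol i j' j hjj) (hle _ _))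
    · -- i' ≤ i, j ≤ j'
      rw [min_eq_right hii, min_eq_left hjj]
      have h1 : μ[ (μ[f | F i j]) | F i' j'] =ᵐ[μ] μ[ (μ[f | F i j]) | F i' j] := by
        have hh : j + (j' - j) = j' := by omega
        have := lemB (j' - j) i j i' (μ[f | F i j]) hii integrable_condExp
          stronglyMeasurable_condExp
        rwa [hh] at this
      exact h1.trans (condExp_condExp_of_le (hrow i' i j hii) (hle _ _))
    · -- i' ≤ i, j' ≤ j
      rw [min_eq_right hii, min_eq_right hjj]
      exact condExp_condExp_of_le (hFle hii hjj) (hle _ _)
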